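/- Let M be a left R-module and α ∈ E = End_R(M). If M decomposes as M = P ⊕ Q where P and Q are β-invariant for every β ∈ E commuting with α, the restriction α|_P is a unit in End(P), and α|_Q is quasinilpotent in End(Q), then α is quasipolar in E. -/

import Mathlib

/-- `q` is quasinilpotent: `1 + q*x` is a unit for every `x` commuting with `q`. -/
def Quasinilpotent {S : Type*} [Ring S] (q : S) : Prop :=
  ∀ x : S, q * x = x * q → IsUnit (1 + q * x)

/-- `a` is quasipolar: there is an idempotent `p` in the double commutant of `a`
with `a + p` a unit and `a*p` quasinilpotent. -/
def Quasipolar {S : Type*} [Ring S] (a : S) : Prop :=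
  ∃ p : S, p * p = p ∧ (∀ y : S, y * a = a * y → p * y = y * p) ∧
    IsUnit (a + p) ∧ Quasinilpotent (a * p)

/-- An endomorphism preserving both parts of a complement pair and restricting to a
bijection on each part is bijective. -/
lemma bijective_of_restrict_bijective {R M : Type*} [Ring R] [AddCommGroup M] [Module R M]
    (P Q : Submodule R M) (hPQ : IsCompl P Q) (f : Module.End R M)
    (hfP : ∀ m ∈ P, f m ∈ P) (hfQ : ∀ m ∈ Q, f m ∈ Q)
    (h1 : Function.Bijective (f.restrict hfP)) (h2 : Function.Bijective (f.restrict hfQ)) :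
    Function.Bijective f := by
  have hsum : ∀ m : M, (↑(P.linearProjOfIsCompl Q hPQ m) : M)
      + ↑(Q.linearProjOfIsCompl P hPQ.symm m) = m :=
    Submodule.projection_add_projection_eq_self hPQ
  constructor
  · have hker : ∀ m : M, f m = 0 → m = 0 := by
      intro m hm
      set a := P.linearProjOfIsCompl Q hPQ m with ha
      set b := Q.linearProjOfIsCompl P hPQ.symm m with hb
      have hab : (↑a : M) + ↑b = m := hsum m
      have hfab : f ↑a + f ↑b = 0 := by
        rw [← map_add, hab, hm]
      have hfa : f (↑a : M) ∈ P := hfP _ a.2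
      have hfb : f (↑b : M) ∈ Q := hfQ _ b.2
      have hfa0 : f (↑a : M) = 0 := by
        have hmem : f (↑a : M) ∈ Q := by
          have : f (↑a : M) = -(f (↑b : M)) := eq_neg_of_add_eq_zero_left hfab
          rw [this]; exact Q.neg_mem hfb
        exact (Submodule.disjoint_def.mp hPQ.disjoint) _ hfa hmem
      have hfb0 : f (↑b : M) = 0 := by
        rw [hfa0, zero_add] at hfab; exact hfab
      have ha0 : a = 0 := by
        apply h1.1
        apply Subtype.ext
        simpa [LinearMap.restrict_apply] using hfa0
      have hb0 : b = 0 := by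
        apply h2.1
        apply Subtype.ext
        simpa [LinearMap.restrict_apply] using hfb0
      rw [← hab, ha0, hb0]; simp
    intro x y hxy
    have : f (x - y) = 0 := by rw [map_sub, hxy, sub_self]
    have := hker _ this
    exact sub_eq_zero.mp this
  · intro m
    obtain ⟨a, ha⟩ := h1.2 (P.linearProjOfIsCompl Q hPQ m)
    obtain ⟨b, hb⟩ := h2.2 (Q.linearProjOfIsCompl P hPQ.symm m)
    refine ⟨↑a + ↑b, ?_⟩
    have ha' : f (↑a : M) = ↑(P.linearProjOfIsCompl Q hPQ m) := by
      have := congrArg (Subtype.val) ha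
      simpa [LinearMap.restrict_apply] using this
    have hb' : f (↑b : M) = ↑(Q.linearProjOfIsCompl P hPQ.symm m) := by
      have := congrArg (Subtype.val) hb
      simpa [LinearMap.restrict_apply] using this
    rw [map_add, ha', hb', hsum]

/-- If `M = P ⊕ Q` with `P, Q` invariant under every endomorphism commuting with `α`,
`α|_P` a unit of `End(P)` and `α|_Q` quasinilpotent in `End(Q)`, then `α` is
quasipolar in `End(M)`. -/
theorem quasipolar_of_decomposition {R M : Type*} [Ring R] [AddCommGroup M] [Module R M]
    (α : Module.End R M) (P Q : Submodule R M) (hPQ : IsCompl P Q)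
    (hinv : ∀ β : Module.End R M, β * α = α * β →
      (∀ m ∈ P, β m ∈ P) ∧ (∀ m ∈ Q, β m ∈ Q))
    (hP : ∀ m ∈ P, α m ∈ P) (hQ : ∀ m ∈ Q, α m ∈ Q)
    (hu : IsUnit (LinearMap.restrict α hP : Module.End R P))
    (hq : Quasinilpotent (LinearMap.restrict α hQ : Module.End R Q)) :
    Quasipolar α := by
  classical
  set πP := P.linearProjOfIsCompl Q hPQ with hπP
  set πQ := Q.linearProjOfIsCompl P hPQ.symm with hπQ
  have hsum : ∀ m : M, (↑(πP m) : M) + ↑(πQ m) = m :=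
    Submodule.projection_add_projection_eq_self hPQ
  set p : Module.End R M := Q.subtype ∘ₗ πQ with hp
  -- basic facts about p
  have hpP : ∀ m ∈ P, p m = 0 := by
    intro m hm
    simp [hp, Submodule.projectionOnto_apply_of_mem_right hPQ.symm hm]
    exact Submodule.projectionOnto_apply_of_mem_right hPQ.symm hm
  have hpQ : ∀ m ∈ Q, p m = m := by
    intro m hm
    simp [hp, Submodule.projectionOnto_apply_of_mem_left hPQ.symm hm]
    exact congrArg Subtype.val (Submodule.projectionOnto_apply_of_mem_left hPQ.symm hm)
  have hpmem : ∀ m : M, p m ∈ Q := fun m => (πQ m).2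
  refine ⟨p, ?_, ?_, ?_, ?_⟩
  · -- p idempotent
    ext m
    exact hpQ _ (hpmem m)
  · -- p commutes with everything commuting with α
    intro y hy
    obtain ⟨hyP, hyQ⟩ := hinv y hy
    ext m
    have hm := hsum m
    calc (p * y) m = p (y (↑(πP m) + ↑(πQ m))) := by rw [Module.End.mul_apply, hm]
      _ = p (y ↑(πP m)) + p (y ↑(πQ m)) := by rw [map_add, map_add]
      _ = y ↑(πQ m) := by
          rw [hpP _ (hyP _ (πP m).2), hpQ _ (hyQ _ (πQ m).2), zero_add]
      _ = y (p m) := rfl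
      _ = (y * p) m := rfl
  · -- α + p is a unit
    set f : Module.End R M := α + p with hf
    have hfP : ∀ m ∈ P, f m ∈ P := by
      intro m hm
      simp only [hf, LinearMap.add_apply, hpP _ hm, add_zero]
      exact hP _ hm
    have hfQ : ∀ m ∈ Q, f m ∈ Q := by
      intro m hm
      simp only [hf, LinearMap.add_apply, hpQ _ hm]
      exact Q.add_mem (hQ _ hm) hm
    have h1 : Function.Bijective (f.restrict hfP) := by
      have : f.restrict hfP = α.restrict hP := by
        ext x
        simp [LinearMap.restrict_apply, hf, hpP _ x.2]
      rw [this]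
      exact (Module.End.isUnit_iff _).mp hu
    have h2 : Function.Bijective (f.restrict hfQ) := by
      have hunit : IsUnit (1 + (α.restrict hQ : Module.End R Q) * 1) := hq 1 (by rw [mul_one, one_mul])
      have heq : f.restrict hfQ = 1 + (α.restrict hQ : Module.End R Q) * 1 := by
        ext x
        simp [LinearMap.restrict_apply, hf, hpQ _ x.2, add_comm]
      rw [heq]
      exact (Module.End.isUnit_iff _).mp hunit
    rw [Module.End.isUnit_iff]
    exact bijective_of_restrict_bijective P Q hPQ f hfP hfQ h1 h2
  · -- α * p is quasinilpotent
    intro x hx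
    set f : Module.End R M := 1 + α * p * x with hf
    have hapxP : ∀ m ∈ P, (α * p * x) m = 0 := by
      intro m hm
      have : (α * p * x) m = (x * (α * p)) m := by rw [← hx]
      rw [this]
      simp [Module.End.mul_apply, hpP _ hm]
    have hapxQ : ∀ m ∈ Q, (α * p * x) m ∈ Q := by
      intro m hm
      simp only [Module.End.mul_apply]
      exact hQ _ (hpmem _)
    have hfP' : ∀ m ∈ P, f m ∈ P := by
      intro m hm
      simp only [hf, LinearMap.add_apply, Module.End.one_apply, hapxP _ hm, add_zero]
      exact hm
    have hfQ' : ∀ m ∈ Q, f m ∈ Q := by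
      intro m hm
      simp only [hf, LinearMap.add_apply, Module.End.one_apply]
      exact Q.add_mem hm (hapxQ _ hm)
    have h1 : Function.Bijective (f.restrict hfP') := by
      have : f.restrict hfP' = 1 := by
        ext m
        simp [LinearMap.restrict_apply, hf, hapxP _ m.2]
      rw [this]
      exact Function.bijective_id
    have h2 : Function.Bijective (f.restrict hfQ') := by
      set q : Module.End R Q := α.restrict hQ with hqdef
      set d : Module.End R Q := πQ ∘ₗ (x ∘ₗ Q.subtype) with hd
      -- key computation : for z ∈ Q, (α * p * x) z = ↑(q (d ⟨z,_⟩))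
      have key : ∀ z : Q, (α * p * x) (z : M) = ↑(q (d z)) := by
        intro z
        have hpxz : p (x (z : M)) = ↑(d z) := by
          simp [hp, hd]
        simp only [Module.End.mul_apply, hpxz]
        rfl
      have hcomm : q * d = d * q := by
        ext z
        have h1' : (α * p * x) (z : M) = (x * (α * p)) (z : M) := by rw [← hx]
        have h2' : (x * (α * p)) (z : M) = x ↑(q z) := by
          simp only [Module.End.mul_apply, hpQ _ z.2]
          rfl
        have h3' : (α * p * x) (z : M) = ↑(q (d z)) := key z
        -- so x ↑(q z) = ↑(q (d z)); apply πQ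
        have h4' : x ↑(q z) = ↑(q (d z)) := by rw [← h2', ← h1', h3']
        have : d (q z) = q (d z) := by
          apply Subtype.ext
          have : (↑(d (q z)) : M) = ↑(πQ (x ↑(q z))) := by simp [hd]
          rw [this, h4']
          exact congrArg _ (Submodule.linearProjOfIsCompl_apply_left hPQ.symm (q (d z)))
        simp only [Module.End.mul_apply]
        exact congrArg Subtype.val this.symm
      have hunit : IsUnit (1 + q * d) := hq d hcomm
      have heq : f.restrict hfQ' = 1 + q * d := by
        ext z
        simp only [LinearMap.restrict_apply, hf, LinearMap.add_apply, Module.End.one_apply,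
          Module.End.mul_apply, Submodule.coe_add]
        have hk := key z
        simp only [Module.End.mul_apply] at hk
        rw [hk]
      rw [heq]
      exact (Module.End.isUnit_iff _).mp hunit
    rw [Module.End.isUnit_iff]
    exact bijective_of_restrict_bijective P Q hPQ f hfP' hfQ' h1 h2
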